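/- Let n ≥ 1 and let 0 < C₁ ≤ 1. Let Z be an n×n real matrix with all entries nonnegative, let ζ* be an n×n permutation matrix attaining ω*(Z) = max_{σ} Σ_i Z_{i,σ(i)}, and let B be an n×n matrix with all entries in [0,1] such that every row sum and every column sum of B is at most 1 − C₁. If Z' = Z − ζ* + B is entrywise nonnegative, then Σ_{i,k} (Z'_{ik})² − Σ_{i,k} (Z_{ik})² ≤ −(2C₁/n)·Σ_{i,k} Z_{ik} + 2n². -/

import Mathlib

/-- The max-weight matching value `ω*(Z) = max_σ Σ_i Z_{i,σ(i)}`. -/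
noncomputable def maxWeight {n : ℕ} (Z : Matrix (Fin n) (Fin n) ℝ) : ℝ :=
  Finset.univ.sup' ⟨1, Finset.mem_univ 1⟩ fun σ : Equiv.Perm (Fin n) => ∑ i, Z i (σ i)

open Finset


/-- Any doubly substochastic nonnegative matrix is dominated entrywise by a
doubly stochastic matrix. -/
lemma exists_ds_ge {n : ℕ} (A : Matrix (Fin n) (Fin n) ℝ)
    (hA0 : ∀ i k, 0 ≤ A i k) (hArow : ∀ i, ∑ k, A i k ≤ 1)
    (hAcol : ∀ k, ∑ i, A i k ≤ 1) :
    ∃ M ∈ doublyStochastic ℝ (Fin n), ∀ i k, A i k ≤ M i k := by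
  classical
  set r : Fin n → ℝ := fun i => 1 - ∑ k, A i k with hr
  set c : Fin n → ℝ := fun k => 1 - ∑ i, A i k with hc
  have hr0 : ∀ i, 0 ≤ r i := fun i => by simp [hr]; linarith [hArow i]
  have hc0 : ∀ k, 0 ≤ c k := fun k => by simp [hc]; linarith [hAcol k]
  set S : ℝ := ∑ i, r i with hS
  have hSc : S = ∑ k, c k := by
    simp [hS, hr, hc, Finset.sum_sub_distrib, Finset.sum_comm (s := univ) (t := univ)
      (f := fun i k => A i k)]
  rcases eq_or_lt_of_le (Finset.sum_nonneg fun i _ => hr0 i) with h0 | hpos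
  · -- S = 0 : A is already doubly stochastic
    have hri : ∀ i, r i = 0 := by
      intro i
      have := (Finset.sum_eq_zero_iff_of_nonneg (fun i _ => hr0 i)).1 h0.symm
      exact this i (mem_univ i)
    have hck : ∀ k, c k = 0 := by
      intro k
      have h0' : ∑ k, c k = 0 := by rw [← hSc, hS, ← h0]
      have := (Finset.sum_eq_zero_iff_of_nonneg (fun k _ => hc0 k)).1 h0'
      exact this k (mem_univ k)
    refine ⟨A, ?_, fun i k => le_refl _⟩
    rw [mem_doublyStochastic_iff_sum]
    refine ⟨hA0, fun i => ?_, fun k => ?_⟩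
    · have := hri i; simp [hr] at this; linarith
    · have := hck k; simp [hc] at this; linarith
  · refine ⟨fun i k => A i k + r i * c k / S, ?_, fun i k => ?_⟩
    · refine mem_doublyStochastic_iff_sum.2 ?_
      have hSpos : (0:ℝ) < S := hpos
      refine ⟨fun i k => add_nonneg (hA0 i k)
        (div_nonneg (mul_nonneg (hr0 i) (hc0 k)) hSpos.le), fun i => ?_, fun k => ?_⟩
      · have h1 : ∑ k, (A i k + r i * c k / S) = (∑ k, A i k) + r i * (∑ k, c k) / S := by
          rw [Finset.sum_add_distrib]
          congr 1
          rw [← Finset.sum_div, ← Finset.mul_sum]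
        rw [h1, ← hSc, mul_div_assoc, div_self (ne_of_gt hSpos), mul_one]
        simp [hr]
      · have h1 : ∑ i, (A i k + r i * c k / S) = (∑ i, A i k) + (∑ i, r i) * c k / S := by
          rw [Finset.sum_add_distrib]
          congr 1
          rw [← Finset.sum_div, ← Finset.sum_mul]
        rw [h1, ← hS, mul_comm S, mul_div_assoc, div_self (ne_of_gt hpos), mul_one]
        simp [hc]
    · have hSpos : (0:ℝ) < S := hpos
      have : 0 ≤ r i * c k / S :=
        div_nonneg (mul_nonneg (hr0 i) (hc0 k)) hSpos.le
      linarith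

lemma ds_ip_le_maxWeight {n : ℕ} (Z M : Matrix (Fin n) (Fin n) ℝ)
    (hM : M ∈ doublyStochastic ℝ (Fin n)) :
    ∑ i, ∑ k, Z i k * M i k ≤ maxWeight Z := by
  classical
  obtain ⟨w, hw0, hw1, hw3⟩ := exists_eq_sum_perm_of_mem_doublyStochastic hM
  have hMik : ∀ i k, M i k = ∑ σ : Equiv.Perm (Fin n), w σ * (if σ i = k then 1 else 0) := by
    intro i k
    rw [← hw3]
    simp [Equiv.Perm.permMatrix, PEquiv.toMatrix_toPEquiv_eq, Matrix.one_apply,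
      Matrix.sum_apply, mul_ite, Equiv.toPEquiv_apply]
  have hrow : ∀ i, ∑ k, Z i k * M i k = ∑ σ : Equiv.Perm (Fin n), w σ * Z i (σ i) := by
    intro i
    simp only [hMik, Finset.mul_sum]
    rw [Finset.sum_comm]
    refine Finset.sum_congr rfl fun σ _ => ?_
    simp [mul_ite, mul_comm, Finset.sum_ite_eq]
  calc ∑ i, ∑ k, Z i k * M i k
      = ∑ σ : Equiv.Perm (Fin n), w σ * ∑ i, Z i (σ i) := by
        simp only [hrow, Finset.mul_sum]
        rw [Finset.sum_comm]
    _ ≤ ∑ σ : Equiv.Perm (Fin n), w σ * maxWeight Z := by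
        apply Finset.sum_le_sum
        intro σ _
        exact mul_le_mul_of_nonneg_left
          (Finset.le_sup' (fun σ : Equiv.Perm (Fin n) => ∑ i, Z i (σ i)) (mem_univ σ)) (hw0 σ)
    _ = maxWeight Z := by rw [← Finset.sum_mul, hw1, one_mul]

lemma substoch_ip_le_maxWeight {n : ℕ} (Z A : Matrix (Fin n) (Fin n) ℝ)
    (hZ : ∀ i k, 0 ≤ Z i k) (hA0 : ∀ i k, 0 ≤ A i k)
    (hArow : ∀ i, ∑ k, A i k ≤ 1) (hAcol : ∀ k, ∑ i, A i k ≤ 1) :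
    ∑ i, ∑ k, Z i k * A i k ≤ maxWeight Z := by
  obtain ⟨M, hM, hle⟩ := exists_ds_ge A hA0 hArow hAcol
  refine le_trans ?_ (ds_ip_le_maxWeight Z M hM)
  refine Finset.sum_le_sum fun i _ => Finset.sum_le_sum fun k _ => ?_
  exact mul_le_mul_of_nonneg_left (hle i k) (hZ i k)

lemma sum_le_n_mul_maxWeight {n : ℕ} (hn : 1 ≤ n) (Z : Matrix (Fin n) (Fin n) ℝ) :
    ∑ i, ∑ k, Z i k ≤ (n : ℝ) * maxWeight Z := by
  haveI : NeZero n := ⟨by omega⟩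
  have key : ∑ d : Fin n, ∑ i, Z i (Equiv.addRight d i) = ∑ i, ∑ k, Z i k := by
    rw [Finset.sum_comm]
    refine Finset.sum_congr rfl fun i _ => ?_
    calc ∑ d : Fin n, Z i (Equiv.addRight d i)
        = ∑ d : Fin n, Z i (Equiv.addLeft i d) := by
          refine Finset.sum_congr rfl fun d _ => ?_
          simp [add_comm]
      _ = ∑ k, Z i k := Equiv.sum_comp (Equiv.addLeft i) (Z i)
  calc ∑ i, ∑ k, Z i k = ∑ d : Fin n, ∑ i, Z i (Equiv.addRight d i) := key.symm
    _ ≤ ∑ _d : Fin n, maxWeight Z :=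
        Finset.sum_le_sum fun d _ =>
          Finset.le_sup' (fun σ : Equiv.Perm (Fin n) => ∑ i, Z i (σ i))
            (Finset.mem_univ (Equiv.addRight d))
    _ = (n : ℝ) * maxWeight Z := by simp [mul_comm]

/-- Drift inequality of eq. (63) of the paper: for the max-weight schedule
`ζ* = P_σ` and arrivals `B` with row/column sums at most `1 - C₁`,
`L(Z') - L(Z) ≤ -(2C₁/n)|Z| + 2n²`. -/
theorem stmt_6 (n : ℕ) (hn : 1 ≤ n) (C₁ : ℝ) (hC₁ : 0 < C₁) (hC₁' : C₁ ≤ 1)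
    (Z : Matrix (Fin n) (Fin n) ℝ) (hZ : ∀ i k, 0 ≤ Z i k)
    (ζstar : Matrix (Fin n) (Fin n) ℝ)
    (σ : Equiv.Perm (Fin n))
    (hperm : ∀ i k, ζstar i k = if σ i = k then (1 : ℝ) else 0)
    (hopt : ∑ i, ∑ k, ζstar i k * Z i k = maxWeight Z)
    (B : Matrix (Fin n) (Fin n) ℝ)
    (hB0 : ∀ i k, 0 ≤ B i k) (hB1 : ∀ i k, B i k ≤ 1)
    (hBrow : ∀ i, ∑ k, B i k ≤ 1 - C₁) (hBcol : ∀ k, ∑ i, B i k ≤ 1 - C₁)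
    (Z' : Matrix (Fin n) (Fin n) ℝ)
    (hZ'def : ∀ i k, Z' i k = Z i k - ζstar i k + B i k)
    (hZ' : ∀ i k, 0 ≤ Z' i k) :
    (∑ i, ∑ k, (Z' i k) ^ 2) - (∑ i, ∑ k, (Z i k) ^ 2)
      ≤ -(2 * C₁ / (n : ℝ)) * (∑ i, ∑ k, Z i k) + 2 * (n : ℝ) ^ 2 := by
  have hnR : (0:ℝ) < n := by exact_mod_cast hn
  set ω := maxWeight Z with hω
  have hω0 : 0 ≤ ω := by
    refine le_trans ?_ (Finset.le_sup' (fun σ : Equiv.Perm (Fin n) => ∑ i, Z i (σ i))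
      (Finset.mem_univ 1))
    exact Finset.sum_nonneg fun i _ => hZ i _
  -- ζ* attains the max, with multiplication commuted
  have hZζ : ∑ i, ∑ k, Z i k * ζstar i k = ω := by
    rw [← hopt]
    exact Finset.sum_congr rfl fun i _ => Finset.sum_congr rfl fun k _ => (mul_comm _ _)
  -- bound on ∑ Z·B
  have hZB : ∑ i, ∑ k, Z i k * B i k ≤ (1 - C₁) * ω := by
    rcases eq_or_lt_of_le hC₁' with h1 | h1
    · -- C₁ = 1 : B = 0
      have hB00 : ∀ i k, B i k = 0 := by
        intro i k
        have h := hBrow i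
        rw [← h1] at h
        have := Finset.sum_nonneg (fun k (_ : k ∈ Finset.univ) => hB0 i k)
        have hsum0 : ∑ k, B i k = 0 := le_antisymm (by linarith) this
        exact le_antisymm
          ((Finset.sum_eq_zero_iff_of_nonneg fun k _ => hB0 i k).1 hsum0 k (Finset.mem_univ k)).le
          (hB0 i k)
      rw [← h1]
      simp [hB00]
    · -- C₁ < 1 : scale B by 1/(1-C₁)
      have ht : (0:ℝ) < 1 - C₁ := by linarith
      have := substoch_ip_le_maxWeight Z (fun i k => B i k / (1 - C₁)) hZ
        (fun i k => div_nonneg (hB0 i k) ht.le)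
        (fun i => by rw [← Finset.sum_div]; exact (div_le_one ht).2 (hBrow i))
        (fun k => by rw [← Finset.sum_div]; exact (div_le_one ht).2 (hBcol k))
      have h2 : ∑ i, ∑ k, Z i k * (B i k / (1 - C₁))
          = (∑ i, ∑ k, Z i k * B i k) / (1 - C₁) := by
        rw [Finset.sum_div]
        exact Finset.sum_congr rfl fun i _ => by
          rw [Finset.sum_div]
          exact Finset.sum_congr rfl fun k _ => by ring
      rw [h2, div_le_iff₀ ht] at this
      linarith [this]
  -- quadratic term bound
  have hζ01 : ∀ i k, 0 ≤ ζstar i k ∧ ζstar i k ≤ 1 := by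
    intro i k; rw [hperm]; split <;> norm_num
  have hD2 : ∑ i, ∑ k, (B i k - ζstar i k) ^ 2 ≤ (n:ℝ) ^ 2 := by
    calc ∑ i, ∑ k, (B i k - ζstar i k) ^ 2
        ≤ ∑ _i : Fin n, ∑ _k : Fin n, (1:ℝ) := by
          refine Finset.sum_le_sum fun i _ => Finset.sum_le_sum fun k _ => ?_
          obtain ⟨h0, h1⟩ := hζ01 i k
          nlinarith [hB0 i k, hB1 i k]
      _ = (n:ℝ)^2 := by simp; ring
  -- expansion
  have expand : (∑ i, ∑ k, (Z' i k)^2) - (∑ i, ∑ k, (Z i k)^2)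
      = 2 * (∑ i, ∑ k, Z i k * B i k) - 2 * (∑ i, ∑ k, Z i k * ζstar i k)
        + ∑ i, ∑ k, (B i k - ζstar i k)^2 := by
    have h1 : ∀ i, ∑ k, (Z' i k)^2
        = ∑ k, ((Z i k)^2 + (2 * (Z i k * B i k) - 2 * (Z i k * ζstar i k)
            + (B i k - ζstar i k)^2)) :=
      fun i => Finset.sum_congr rfl fun k _ => by rw [hZ'def]; ring
    simp only [h1, Finset.sum_add_distrib, Finset.sum_sub_distrib, Finset.mul_sum]
    ring
  have hsum_le : ∑ i, ∑ k, Z i k ≤ (n:ℝ) * ω := sum_le_n_mul_maxWeight hn Z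
  rw [expand, hZζ]
  have hfinal : -(2 * C₁ / (n : ℝ)) * (∑ i, ∑ k, Z i k) ≥ -(2 * C₁) * ω := by
    have h3 : (2 * C₁ / (n:ℝ)) * (∑ i, ∑ k, Z i k) ≤ (2 * C₁ / (n:ℝ)) * ((n:ℝ) * ω) := by
      apply mul_le_mul_of_nonneg_left hsum_le
      positivity
    have h4 : (2 * C₁ / (n:ℝ)) * ((n:ℝ) * ω) = 2 * C₁ * ω := by
      field_simp
    nlinarith [h3, h4]
  nlinarith [hZB, hD2, hfinal, sq_nonneg ((n:ℝ))]
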